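/- Let (T, τ) be a pointed endofunctor on a category K (an endofunctor T with a natural transformation τ : id ⇒ T). If the forgetful functor U : T-Alg → K from the category of algebras for the pointed endofunctor has a left adjoint F, then the monad generated by the adjunction F ⊣ U has category of Eilenberg–Moore algebras isomorphic, over K, to T-Alg. -/

import Mathlib

open CategoryTheory CategoryTheory.Limits

universe v u

variable {K : Type u} [Category.{v} K]

/-- The category of algebras for a pointed endofunctor `(T, τ)`: objects are pairs
`(X, x : TX ⟶ X)` with `x ∘ τ_X = id`, morphisms are maps commuting with the structure
maps. -/
structure PAlg (T : K ⥤ K) (τ : 𝟭 K ⟶ T) where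
  X : K
  a : T.obj X ⟶ X
  unit : τ.app X ≫ a = 𝟙 X

instance (T : K ⥤ K) (τ : 𝟭 K ⟶ T) : Category (PAlg T τ) where
  Hom A B := { f : A.X ⟶ B.X // T.map f ≫ B.a = A.a ≫ f }
  id A := ⟨𝟙 A.X, by simp⟩
  comp f g := ⟨f.1 ≫ g.1, by
    rw [T.map_comp, Category.assoc, g.2, ← Category.assoc, f.2, Category.assoc]⟩
  id_comp f := Subtype.ext (Category.id_comp f.1)
  comp_id f := Subtype.ext (Category.comp_id f.1)
  assoc f g h := Subtype.ext (Category.assoc f.1 g.1 h.1)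

/-- The forgetful functor from algebras for a pointed endofunctor to the base category. -/
def PAlg.forget (T : K ⥤ K) (τ : 𝟭 K ⟶ T) : PAlg T τ ⥤ K where
  obj A := A.X
  map f := f.1

namespace Stmt9Aux

variable {T : K ⥤ K} {τ : 𝟭 K ⟶ T}

@[simp] lemma forget_map (A B : PAlg T τ) (f : A ⟶ B) :
    (PAlg.forget T τ).map f = f.1 := rfl

instance : (PAlg.forget T τ).ReflectsIsomorphisms := by
  constructor
  intro A B f hf
  replace hf : IsIso f.1 := hf
  refine ⟨⟨⟨inv f.1, ?_⟩, ?_, ?_⟩⟩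
  · rw [← cancel_epi (T.map f.1), ← Category.assoc, ← T.map_comp, IsIso.hom_inv_id,
      T.map_id, Category.id_comp, ← Category.assoc, f.2, Category.assoc,
      IsIso.hom_inv_id, Category.comp_id]
  · exact Subtype.ext (by show f.1 ≫ inv f.1 = 𝟙 A.X; simp)
  · exact Subtype.ext (by show inv f.1 ≫ f.1 = 𝟙 B.X; simp)

section Creates

variable {A B : PAlg T τ} (f g : A ⟶ B) {Z : K} {π : B.X ⟶ Z}
  (σ : IsSplitCoequalizer f.1 g.1 π)

/-- The lifted algebra structure on the split coequalizer. -/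
def liftAlg : PAlg T τ where
  X := Z
  a := T.map σ.rightSection ≫ B.a ≫ π
  unit := by
    have h := τ.naturality σ.rightSection
    dsimp at h
    rw [← Category.assoc, ← h, Category.assoc, ← Category.assoc (τ.app B.X), B.unit]
    simp [σ.rightSection_π]

lemma π_is_alg_hom : T.map π ≫ (liftAlg f g σ).a = B.a ≫ π := by
  show T.map π ≫ T.map σ.rightSection ≫ B.a ≫ π = B.a ≫ π
  calc T.map π ≫ T.map σ.rightSection ≫ B.a ≫ π
      = T.map (π ≫ σ.rightSection) ≫ B.a ≫ π := by rw [T.map_comp, Category.assoc]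
    _ = T.map (σ.leftSection ≫ f.1) ≫ B.a ≫ π := by rw [σ.leftSection_top]
    _ = T.map σ.leftSection ≫ (T.map f.1 ≫ B.a) ≫ π := by
          rw [T.map_comp]; simp only [Category.assoc]
    _ = T.map σ.leftSection ≫ (A.a ≫ f.1) ≫ π := by rw [f.2]
    _ = T.map σ.leftSection ≫ A.a ≫ g.1 ≫ π := by
          simp only [Category.assoc]; rw [σ.condition]
    _ = T.map σ.leftSection ≫ (T.map g.1 ≫ B.a) ≫ π := by rw [g.2]; simp only [Category.assoc]
    _ = T.map (σ.leftSection ≫ g.1) ≫ B.a ≫ π := by rw [T.map_comp]; simp only [Category.assoc]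
    _ = B.a ≫ π := by rw [σ.leftSection_bottom, T.map_id, Category.id_comp]

/-- The lifted cofork in `PAlg`. -/
def liftCofork : Cofork f g :=
  Cofork.ofπ (⟨π, π_is_alg_hom f g σ⟩ : B ⟶ liftAlg f g σ)
    (Subtype.ext (by exact σ.condition))

lemma π_desc {C : K} (c : B.X ⟶ C) (hc : f.1 ≫ c = g.1 ≫ c) :
    π ≫ σ.rightSection ≫ c = c := by
  rw [← Category.assoc, ← σ.leftSection_top, Category.assoc, hc, ← Category.assoc,
    σ.leftSection_bottom, Category.id_comp]

lemma desc_is_alg_hom (s : Cofork f g) :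
    T.map (σ.rightSection ≫ s.π.1) ≫ s.pt.a
      = (liftAlg f g σ).a ≫ (σ.rightSection ≫ s.π.1) := by
  have hπs : π ≫ σ.rightSection ≫ s.π.1 = s.π.1 :=
    π_desc f g σ _ (congrArg Subtype.val s.condition)
  have h2 : T.map s.π.1 ≫ s.pt.a = B.a ≫ s.π.1 := s.π.2
  show _ = (T.map σ.rightSection ≫ B.a ≫ π) ≫ _
  rw [T.map_comp, Category.assoc, h2]
  erw [Category.assoc, Category.assoc]
  erw [hπs]

/-- The lifted cofork is a colimit in `PAlg`. -/
def liftCoforkIsColimit : IsColimit (liftCofork f g σ) := by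
  refine Cofork.IsColimit.mk' _ fun s =>
    ⟨⟨σ.rightSection ≫ s.π.1, desc_is_alg_hom f g σ s⟩, ?_, ?_⟩
  · exact Subtype.ext (π_desc f g σ _ (congrArg Subtype.val s.condition))
  · intro m hm
    refine Subtype.ext ?_
    have h1 : π ≫ m.1 = s.π.1 := congrArg Subtype.val hm
    show m.1 = σ.rightSection ≫ s.π.1
    erw [← h1, ← Category.assoc, σ.rightSection_π, Category.id_comp]

/-- The image of the lifted cofork under the forgetful functor is a colimit. -/
def mapLiftCoforkIsColimit :
    IsColimit ((PAlg.forget T τ).mapCocone (liftCofork f g σ)) := by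
  refine ⟨fun s => σ.rightSection ≫ s.ι.app WalkingParallelPair.one, ?_, ?_⟩
  · intro s j
    have hfg : f.1 ≫ s.ι.app WalkingParallelPair.one
        = g.1 ≫ s.ι.app WalkingParallelPair.one := by
      have hf := s.w WalkingParallelPairHom.left
      have hg := s.w WalkingParallelPairHom.right
      dsimp at hf hg
      erw [hf, hg]
    have hone : π ≫ σ.rightSection ≫ s.ι.app WalkingParallelPair.one
        = s.ι.app WalkingParallelPair.one := π_desc f g σ _ hfg
    cases j with
    | one => exact hone
    | zero =>
      show (f.1 ≫ π) ≫ _ = _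
      erw [Category.assoc, hone]
      exact s.w WalkingParallelPairHom.left
  · intro s m hm
    have h1 := hm WalkingParallelPair.one
    show m = σ.rightSection ≫ s.ι.app WalkingParallelPair.one
    rw [← h1]
    show m = σ.rightSection ≫ π ≫ m
    erw [← Category.assoc, σ.rightSection_π, Category.id_comp]

end Creates

noncomputable instance : Monad.CreatesColimitOfIsSplitPair (PAlg.forget T τ) := by
  constructor
  intro A B f g hsplit
  have σ := HasSplitCoequalizer.isSplitCoequalizer
    ((PAlg.forget T τ).map f) ((PAlg.forget T τ).map g)
  exact createsColimitOfReflectsIso' (mapLiftCoforkIsColimit f g σ)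
    { liftedCocone := liftCofork f g σ
      validLift := Iso.refl _
      makesColimit := liftCoforkIsColimit f g σ }

section Main

variable {F : K ⥤ PAlg T τ} (adj : F ⊣ PAlg.forget T τ)

/-- An Eilenberg–Moore algebra for the generated monad yields a `T`-algebra. -/
def toPAlg : adj.toMonad.Algebra ⥤ PAlg T τ where
  obj A :=
    { X := A.A
      a := T.map (adj.unit.app A.A) ≫ (F.obj A.A).a ≫ A.a
      unit := by
        have h := τ.naturality (adj.unit.app A.A)
        dsimp at h
        erw [← Category.assoc, ← h, Category.assoc, ← Category.assoc (τ.app _),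
          show τ.app ((PAlg.forget T τ).obj (F.obj A.A)) ≫ (F.obj A.A).a = 𝟙 _ from
            (F.obj A.A).unit, Category.id_comp]
        exact A.unit }
  map {A B} f :=
    ⟨f.f, by
      have h1 : f.f ≫ adj.unit.app B.A = adj.unit.app A.A ≫ (F.map f.f).1 := by
        exact adj.unit.naturality f.f
      have h2 : T.map (F.map f.f).1 ≫ (F.obj B.A).a = (F.obj A.A).a ≫ (F.map f.f).1 :=
        (F.map f.f).2
      have h3 : (F.map f.f).1 ≫ B.a = A.a ≫ f.f := f.h
      calc T.map f.f ≫ T.map (adj.unit.app B.A) ≫ (F.obj B.A).a ≫ B.a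
          = T.map (f.f ≫ adj.unit.app B.A) ≫ (F.obj B.A).a ≫ B.a := by
            rw [T.map_comp, Category.assoc]
        _ = T.map (adj.unit.app A.A) ≫ (T.map (F.map f.f).1 ≫ (F.obj B.A).a) ≫ B.a := by
            erw [h1, T.map_comp]; simp only [Category.assoc]; erw [Category.assoc]; rfl
        _ = T.map (adj.unit.app A.A) ≫ (F.obj A.A).a ≫ (F.map f.f).1 ≫ B.a := by
            erw [h2, Category.assoc]
        _ = (T.map (adj.unit.app A.A) ≫ (F.obj A.A).a ≫ A.a) ≫ f.f := by
            rw [h3]; simp only [Category.assoc]; erw [Category.assoc]; rfl⟩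
  map_id A := Subtype.ext rfl
  map_comp f g := Subtype.ext rfl

lemma comparison_toPAlg_obj_a (B : PAlg T τ) :
    ((toPAlg adj).obj ((Monad.comparison adj).obj B)).a = B.a := by
  show T.map (adj.unit.app B.X) ≫ (F.obj B.X).a ≫ (adj.counit.app B).1 = B.a
  have h1 : T.map ((adj.counit.app B).1) ≫ B.a = (F.obj B.X).a ≫ (adj.counit.app B).1 :=
    (adj.counit.app B).2
  have h2 : adj.unit.app B.X ≫ (adj.counit.app B).1 = 𝟙 B.X :=
    adj.right_triangle_components B
  erw [← h1, ← Category.assoc, ← T.map_comp, h2]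
  simp

/-- The comparison functor composed with `toPAlg` is the identity up to isomorphism. -/
def compIso : Monad.comparison adj ⋙ toPAlg adj ≅ 𝟭 (PAlg T τ) :=
  NatIso.ofComponents
    (fun B =>
      { hom := ⟨𝟙 B.X, by
          show T.map (𝟙 B.X) ≫ B.a
            = ((toPAlg adj).obj ((Monad.comparison adj).obj B)).a ≫ 𝟙 B.X
          rw [comparison_toPAlg_obj_a adj B, T.map_id, Category.id_comp]
          exact (Category.comp_id B.a).symm⟩
        inv := ⟨𝟙 B.X, by
          show T.map (𝟙 B.X) ≫ ((toPAlg adj).obj ((Monad.comparison adj).obj B)).a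
            = B.a ≫ 𝟙 B.X
          erw [comparison_toPAlg_obj_a adj B, T.map_id, Category.id_comp]
          exact (Category.comp_id B.a).symm⟩
        hom_inv_id := Subtype.ext (Category.id_comp (𝟙 B.X))
        inv_hom_id := Subtype.ext (Category.id_comp (𝟙 B.X)) })
    (fun {A B} f => Subtype.ext (by
      show f.1 ≫ 𝟙 B.X = 𝟙 A.X ≫ f.1
      simp))

end Main

end Stmt9Aux

/-- if the forgetful functor `U : T-Alg → K` from the category of algebras for
a pointed endofunctor `(T, τ)` has a left adjoint `F`, then the category of
Eilenberg–Moore algebras of the monad generated by the adjunction `F ⊣ U` (the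
algebraically-free monad on `(T, τ)`) is isomorphic over `K` to `T-Alg`. -/
theorem stmt9 (T : K ⥤ K) (τ : 𝟭 K ⟶ T) (F : K ⥤ PAlg T τ)
    (adj : F ⊣ PAlg.forget T τ) :
    ∃ e : adj.toMonad.Algebra ≌ PAlg T τ,
      e.functor ⋙ PAlg.forget T τ = adj.toMonad.forget := by
  haveI : (Monad.comparison adj).IsEquivalence := by
    exact (Monad.monadicOfCreatesGSplitCoequalizers adj).eqv
  haveI : (Monad.comparison adj ⋙ Stmt9Aux.toPAlg adj).IsEquivalence :=
    Functor.isEquivalence_of_iso (Stmt9Aux.compIso adj).symm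
  haveI : (Stmt9Aux.toPAlg adj).IsEquivalence :=
    Functor.isEquivalence_of_comp_left (Monad.comparison adj) (Stmt9Aux.toPAlg adj)
  exact ⟨(Stmt9Aux.toPAlg adj).asEquivalence, rfl⟩
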